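/- Let F ⊆ {1,…,n}, f ∈ ℤ_+, x ∈ {0,1}^n, and let β ∈ ℝ_+^n satisfy β_1 ≤ … ≤ β_n with β_0 := 0. Then max{ Σ_{i∈F} β_i y_i : y ∈ {0,1}^F, y_i ≤ 1 − x_i for all i ∈ F, Σ_{i∈F} y_i ≤ f } = min_{j ∈ {0,…,n}} ( β_j f + Σ_{i ∈ F, i > j} (β_i − β_j)(1 − x_i) ). -/

import Mathlib

/-- The optimal value of the follower's subproblem restricted to one group `F`
with capacity `f`. -/
noncomputable def groupVal (F : Finset ℕ) (f : ℕ) (β : ℕ → ℝ) (x : ℕ → ℝ) : ℝ :=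
  sSup {v : ℝ | ∃ y : ℕ → ℝ,
    (∀ i, y i = 0 ∨ y i = 1) ∧
    (∀ i ∈ F, y i ≤ 1 - x i) ∧
    (∑ i ∈ F, y i ≤ (f : ℝ)) ∧
    v = ∑ i ∈ F, β i * y i}

private lemma weak_duality (n : ℕ) (β : ℕ → ℝ) (hβ0 : β 0 = 0)
    (hβmono : ∀ i j : ℕ, i ≤ j → j ≤ n → β i ≤ β j)
    (F : Finset ℕ) (hF : F ⊆ Finset.Icc 1 n) (f : ℕ) (x : ℕ → ℝ)
    (y : ℕ → ℝ) (hybin : ∀ i, y i = 0 ∨ y i = 1)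
    (hyx : ∀ i ∈ F, y i ≤ 1 - x i) (hysum : ∑ i ∈ F, y i ≤ (f : ℝ))
    (j : ℕ) (hj : j ≤ n) :
    ∑ i ∈ F, β i * y i
      ≤ β j * (f : ℝ) + ∑ i ∈ F.filter (fun i => j < i), (β i - β j) * (1 - x i) := by
  have hy0 : ∀ i, 0 ≤ y i := fun i => by rcases hybin i with h | h <;> simp [h]
  have hβj : 0 ≤ β j := by rw [← hβ0]; exact hβmono 0 j (Nat.zero_le _) hj
  have h1 : ∑ i ∈ F, β i * y i
      = β j * ∑ i ∈ F, y i + ∑ i ∈ F, (β i - β j) * y i := by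
    rw [Finset.mul_sum, ← Finset.sum_add_distrib]
    exact Finset.sum_congr rfl (fun i _ => by ring)
  rw [h1]
  have h2 : β j * ∑ i ∈ F, y i ≤ β j * (f : ℝ) :=
    mul_le_mul_of_nonneg_left hysum hβj
  have h3 : ∑ i ∈ F, (β i - β j) * y i
      ≤ ∑ i ∈ F.filter (fun i => j < i), (β i - β j) * (1 - x i) := by
    rw [← Finset.sum_filter_add_sum_filter_not F (fun i => j < i)
      (fun i => (β i - β j) * y i)]
    have hpos : ∑ i ∈ F.filter (fun i => j < i), (β i - β j) * y i
        ≤ ∑ i ∈ F.filter (fun i => j < i), (β i - β j) * (1 - x i) := by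
      apply Finset.sum_le_sum
      intro i hi
      rw [Finset.mem_filter] at hi
      have hin : i ≤ n := (Finset.mem_Icc.mp (hF hi.1)).2
      have hβi : β j ≤ β i := hβmono j i (le_of_lt hi.2) hin
      exact mul_le_mul_of_nonneg_left (hyx i hi.1) (sub_nonneg.mpr hβi)
    have hneg : ∑ i ∈ F.filter (fun i => ¬ j < i), (β i - β j) * y i ≤ 0 := by
      apply Finset.sum_nonpos
      intro i hi
      rw [Finset.mem_filter] at hi
      have hβi : β i ≤ β j := hβmono i j (by omega) hj
      exact mul_nonpos_of_nonpos_of_nonneg (sub_nonpos.mpr hβi) (hy0 i)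
    linarith
  linarith

private lemma exists_level (n f : ℕ) (A : Finset ℕ) (hA : A ⊆ Finset.Icc 1 n)
    (hf : f < A.card) :
    ∃ j ≤ n, (A.filter (fun i => j < i)).card = f := by
  have hPn : (A.filter (fun i => n < i)).card ≤ f := by
    have hempty : A.filter (fun i => n < i) = ∅ := by
      apply Finset.filter_eq_empty_iff.mpr
      intro i hi
      have := (Finset.mem_Icc.mp (hA hi)).2
      omega
    simp [hempty]
  have hex : ∃ j, (A.filter (fun i => j < i)).card ≤ f := ⟨n, hPn⟩
  have hjle : (A.filter (fun i => (Nat.find hex) < i)).card ≤ f := Nat.find_spec hex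
  have hjn : Nat.find hex ≤ n := Nat.find_le hPn
  set j := Nat.find hex with hjdef
  have hj0 : j ≠ 0 := by
    intro h
    have hfull : A.filter (fun i => 0 < i) = A := by
      apply Finset.filter_true_of_mem
      intro i hi
      have := (Finset.mem_Icc.mp (hA hi)).1
      omega
    rw [h, hfull] at hjle
    omega
  have hprev : ¬ (A.filter (fun i => (j - 1) < i)).card ≤ f :=
    Nat.find_min hex (by omega)
  have hstep : (A.filter (fun i => (j - 1) < i)).card
      ≤ (A.filter (fun i => j < i)).card + 1 := by
    have hsub : A.filter (fun i => (j - 1) < i)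
        ⊆ insert j (A.filter (fun i => j < i)) := by
      intro i hi
      simp only [Finset.mem_filter, Finset.mem_insert] at *
      rcases Nat.lt_or_ge j i with h | h
      · exact Or.inr ⟨hi.1, h⟩
      · left; omega
    calc (A.filter (fun i => (j - 1) < i)).card
        ≤ (insert j (A.filter (fun i => j < i))).card := Finset.card_le_card hsub
      _ ≤ (A.filter (fun i => j < i)).card + 1 := Finset.card_insert_le _ _
  exact ⟨j, hjn, by omega⟩

/-- LP-duality identity for a single group,
`max{∑_{i∈F} β_i y_i : y binary, y ≤ 1 - x on F, ∑_{i∈F} y_i ≤ f}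
  = min_{j ∈ {0,…,n}} ( β_j f + ∑_{i ∈ F, i > j} (β_i - β_j)(1 - x_i) )`. -/
theorem group_dual_value (n : ℕ) (β : ℕ → ℝ)
    (hβ0 : β 0 = 0)
    (hβmono : ∀ i j : ℕ, i ≤ j → j ≤ n → β i ≤ β j)
    (F : Finset ℕ) (hF : F ⊆ Finset.Icc 1 n) (f : ℕ)
    (x : ℕ → ℝ) (hx : ∀ i, x i = 0 ∨ x i = 1) :
    groupVal F f β x
      = Finset.inf' (Finset.range (n + 1)) Finset.nonempty_range_add_one
          (fun j => β j * (f : ℝ)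
            + ∑ i ∈ F.filter (fun i => j < i), (β i - β j) * (1 - x i)) := by
  classical
  rw [groupVal]
  set S : Set ℝ := {v : ℝ | ∃ y : ℕ → ℝ,
    (∀ i, y i = 0 ∨ y i = 1) ∧
    (∀ i ∈ F, y i ≤ 1 - x i) ∧
    (∑ i ∈ F, y i ≤ (f : ℝ)) ∧
    v = ∑ i ∈ F, β i * y i} with hSdef
  set G : ℕ → ℝ := fun j => β j * (f : ℝ)
    + ∑ i ∈ F.filter (fun i => j < i), (β i - β j) * (1 - x i) with hGdef
  have hx01 : ∀ i, 0 ≤ 1 - x i := fun i => by rcases hx i with h | h <;> simp [h]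
  have hweak : ∀ v ∈ S, ∀ j ≤ n, v ≤ G j := by
    rintro v ⟨y, hbin, hyx, hsum, rfl⟩ j hj
    exact weak_duality n β hβ0 hβmono F hF f x y hbin hyx hsum j hj
  have hne : S.Nonempty := by
    refine ⟨0, fun _ => (0 : ℝ), fun _ => Or.inl rfl, fun i _ => by simpa using hx01 i,
      by simp, by simp⟩
  have hbdd : BddAbove S := ⟨G 0, fun v hv => hweak v hv 0 (Nat.zero_le _)⟩
  set A := F.filter (fun i => x i = 0) with hAdef
  have hAF : A ⊆ F := Finset.filter_subset _ _
  -- the optimal primal/dual pair, by cases on whether capacity binds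
  have hstrong : ∃ v ∈ S, ∃ j ≤ n, G j ≤ v := by
    by_cases hcase : A.card ≤ f
    · -- capacity does not bind: take all available elements, j = 0
      set y : ℕ → ℝ := fun i => if i ∈ A then 1 else 0 with hydef
      have hyeq : ∀ i ∈ F, y i = 1 - x i := by
        intro i hi
        by_cases hmem : i ∈ A
        · have hx0 : x i = 0 := (Finset.mem_filter.mp hmem).2
          simp [hydef, hmem, hx0]
        · have hx1 : x i = 1 := by
            rcases hx i with h | h
            · exact absurd (Finset.mem_filter.mpr ⟨hi, h⟩) hmem
            · exact h
          simp [hydef, hmem, hx1]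
      have hsum : ∑ i ∈ F, y i = (A.card : ℝ) := by
        rw [hydef]
        simp only []
        rw [Finset.sum_ite_mem F A (fun _ => (1 : ℝ)),
          Finset.inter_eq_right.mpr hAF]
        simp
      refine ⟨∑ i ∈ F, β i * y i, ⟨y, fun i => by by_cases h : i ∈ A <;> simp [hydef, h],
        fun i hi => (hyeq i hi).le, by rw [hsum]; exact_mod_cast hcase, rfl⟩,
        0, Nat.zero_le _, ?_⟩
      have hfilt : F.filter (fun i => 0 < i) = F := by
        apply Finset.filter_true_of_mem
        intro i hi
        have := (Finset.mem_Icc.mp (hF hi)).1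
        omega
      have : G 0 = ∑ i ∈ F, β i * y i := by
        rw [hGdef]
        simp only [hβ0, zero_mul, zero_add, hfilt, sub_zero]
        exact Finset.sum_congr rfl (fun i hi => by rw [hyeq i hi])
      exact this.le
    · -- capacity binds: take the top f available elements
      push_neg at hcase
      obtain ⟨j, hjn, hjcard⟩ := exists_level n f A (hAF.trans hF) hcase
      set B := A.filter (fun i => j < i) with hBdef
      have hBA : B ⊆ A := Finset.filter_subset _ _
      have hBF : B ⊆ F := hBA.trans hAF
      have hBx : ∀ i ∈ B, x i = 0 := fun i hi => (Finset.mem_filter.mp (hBA hi)).2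
      set y : ℕ → ℝ := fun i => if i ∈ B then 1 else 0 with hydef
      have hsum : ∑ i ∈ F, y i = (f : ℝ) := by
        rw [hydef]
        simp only []
        rw [Finset.sum_ite_mem F B (fun _ => (1 : ℝ)),
          Finset.inter_eq_right.mpr hBF]
        simp [hjcard]
      have hval : ∑ i ∈ F, β i * y i = ∑ i ∈ B, β i := by
        rw [hydef]
        simp only [mul_ite, mul_one, mul_zero]
        rw [Finset.sum_ite_mem F B β, Finset.inter_eq_right.mpr hBF]
      refine ⟨∑ i ∈ F, β i * y i, ⟨y, fun i => by by_cases h : i ∈ B <;> simp [hydef, h],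
        ?_, hsum.le, rfl⟩, j, hjn, ?_⟩
      · intro i hi
        by_cases hmem : i ∈ B
        · simp [hydef, hmem, hBx i hmem]
        · have := hx01 i
          simp [hydef, hmem]
          linarith
      · have hGj : G j = ∑ i ∈ B, β i := by
          rw [hGdef]
          simp only []
          have hsub : B ⊆ F.filter (fun i => j < i) := by
            intro i hi
            have h := Finset.mem_filter.mp hi
            exact Finset.mem_filter.mpr ⟨hAF h.1, h.2⟩
          have hzero : ∀ i ∈ F.filter (fun i => j < i), i ∉ B →
              (β i - β j) * (1 - x i) = 0 := by
            intro i hi hni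
            rw [Finset.mem_filter] at hi
            have hx1 : x i = 1 := by
              rcases hx i with h | h
              · exact absurd (Finset.mem_filter.mpr
                  ⟨Finset.mem_filter.mpr ⟨hi.1, h⟩, hi.2⟩) hni
              · exact h
            rw [hx1]; ring
          rw [← Finset.sum_subset hsub hzero]
          have : ∑ i ∈ B, (β i - β j) * (1 - x i) = ∑ i ∈ B, (β i - β j) := by
            apply Finset.sum_congr rfl
            intro i hi
            rw [hBx i hi]; ring
          rw [this, Finset.sum_sub_distrib, Finset.sum_const, hjcard]
          ring
        rw [hGj, hval]
  obtain ⟨v, hvS, j, hjn, hGv⟩ := hstrong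
  apply le_antisymm
  · apply csSup_le hne
    intro w hw
    apply Finset.le_inf'
    intro k hk
    exact hweak w hw k (Nat.lt_succ_iff.mp (Finset.mem_range.mp hk))
  · calc Finset.inf' (Finset.range (n + 1)) Finset.nonempty_range_add_one G
        ≤ G j := Finset.inf'_le G (Finset.mem_range.mpr (Nat.lt_succ_iff.mpr hjn))
      _ ≤ v := hGv
      _ ≤ sSup S := le_csSup hbdd hvS
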